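/- Let p⁻, p₀, p⁺ ≥ 0 with p⁻ + p₀ + p⁺ = 1 and p⁻ = p⁺ > 0, let X₁, X₂, … be i.i.d. with P(Xᵢ = −1) = p⁻, P(Xᵢ = 0) = p₀, P(Xᵢ = +1) = p⁺, and let Y₀ = 0, Yᵢ = max(0, Yᵢ₋₁ + Xᵢ). Then E[Yₙ] = Θ(√n): there exist constants c₁, c₂ > 0 (depending only on p⁻, p₀, p⁺) and n₀ such that c₁·√n ≤ E[Yₙ] ≤ c₂·√n for all n ≥ n₀. -/

import Mathlib

open MeasureTheory ProbabilityTheory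

namespace Stmt2Aux

/-- The reflected walk as a function of the increments. -/
def walkF : ℕ → (ℕ → ℤ) → ℤ
  | 0, _ => 0
  | k+1, v => max 0 (walkF k v + v (k+1))

lemma walkF_measurable (n : ℕ) : Measurable (walkF n) := by
  induction n with
  | zero => exact measurable_const
  | succ k ih =>
      exact Measurable.max measurable_const (ih.add (measurable_pi_apply _))

lemma walkF_congr {v w : ℕ → ℤ} : ∀ n, (∀ i, i ≤ n → v i = w i) → walkF n v = walkF n w
  | 0, _ => rfl
  | k+1, h => by
      simp only [walkF]
      rw [walkF_congr k (fun i hi => h i (le_trans hi (Nat.le_succ k))), h (k+1) le_rfl]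

/-- Cauchy–Schwarz inequality for real integrals. -/
lemma my_cauchy {α : Type*} {m : MeasurableSpace α} {μ : Measure α} {f g : α → ℝ}
    (hf : Integrable (fun x => f x ^ 2) μ) (hg : Integrable (fun x => g x ^ 2) μ)
    (hfg : Integrable (fun x => f x * g x) μ) :
    (∫ x, f x * g x ∂μ) ^ 2 ≤ (∫ x, f x ^ 2 ∂μ) * (∫ x, g x ^ 2 ∂μ) := by
  set A := ∫ x, f x ^ 2 ∂μ with hA
  set B := ∫ x, f x * g x ∂μ with hB
  set C := ∫ x, g x ^ 2 ∂μ with hC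
  have hA0 : 0 ≤ A := integral_nonneg fun x => sq_nonneg _
  have hC0 : 0 ≤ C := integral_nonneg fun x => sq_nonneg _
  rcases eq_or_lt_of_le hC0 with hCz | hCpos
  · -- C = 0 : then g = 0 a.e., so B = 0
    have hgz : (fun x => g x ^ 2) =ᵐ[μ] 0 := by
      have := (integral_eq_zero_iff_of_nonneg_ae
        (Filter.Eventually.of_forall fun x => sq_nonneg (g x)) hg).mp hCz.symm
      exact this
    have hfgz : (fun x => f x * g x) =ᵐ[μ] 0 := by
      filter_upwards [hgz] with x hx
      have : g x = 0 := by
        have hx' : g x ^ 2 = 0 := hx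
        exact pow_eq_zero_iff two_ne_zero |>.mp hx'
      simp [this]
    have : B = 0 := by rw [hB, integral_congr_ae hfgz]; simp
    rw [this]
    nlinarith
  · -- C > 0
    have key : 0 ≤ ∫ x, (C * f x - B * g x) ^ 2 ∂μ :=
      integral_nonneg fun x => sq_nonneg _
    have expand : (fun x => (C * f x - B * g x) ^ 2)
        = fun x => C^2 * (f x ^ 2) - 2*C*B * (f x * g x) + B^2 * (g x ^ 2) := by
      funext x; ring
    have hint1 : Integrable (fun x => C^2 * (f x ^ 2) - 2*C*B * (f x * g x)) μ :=
      (hf.const_mul _).sub (hfg.const_mul _)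
    have hval : ∫ x, (C * f x - B * g x) ^ 2 ∂μ
        = C^2 * A - 2*C*B * B + B^2 * C := by
      rw [expand, integral_add hint1 (hg.const_mul _), integral_sub (hf.const_mul _)
        (hfg.const_mul _), integral_const_mul, integral_const_mul, integral_const_mul,
        ← hA, ← hB, ← hC]
    rw [hval] at key
    have : 0 ≤ C * (C * A - B^2) := by nlinarith
    nlinarith

end Stmt2Aux

set_option maxHeartbeats 2000000 in
open Stmt2Aux in
/-- Reflected random walk with i.i.d. increments in {-1, 0, +1} and p⁻ = p⁺ > 0:
E[Yₙ] = Θ(√n). -/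
theorem stmt2
    {Ω : Type*} [MeasureSpace Ω] [IsProbabilityMeasure (ℙ : Measure Ω)]
    (pm p0 pp : ℝ) (hpm : 0 ≤ pm) (hp0 : 0 ≤ p0) (hpp : 0 ≤ pp)
    (hsum : pm + p0 + pp = 1) (heq : pm = pp) (hpos : 0 < pp)
    (X : ℕ → Ω → ℤ) (hmeas : ∀ i, Measurable (X i))
    (hindep : iIndepFun X ℙ)
    (hident : ∀ i j, IdentDistrib (X i) (X j) ℙ ℙ)
    (hXm : ∀ i, (ℙ {ω | X i ω = -1}).toReal = pm)
    (hX0 : ∀ i, (ℙ {ω | X i ω = 0}).toReal = p0)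
    (hXp : ∀ i, (ℙ {ω | X i ω = 1}).toReal = pp)
    (Y : ℕ → Ω → ℤ)
    (hY0 : ∀ ω, Y 0 ω = 0)
    (hYs : ∀ i ω, Y (i + 1) ω = max 0 (Y i ω + X (i + 1) ω)) :
    ∃ c₁ c₂ : ℝ, 0 < c₁ ∧ 0 < c₂ ∧ ∃ n₀ : ℕ, ∀ n : ℕ, n₀ ≤ n →
      c₁ * Real.sqrt n ≤ (∫ ω, ((Y n ω : ℝ)) ∂ℙ) ∧
      (∫ ω, ((Y n ω : ℝ)) ∂ℙ) ≤ c₂ * Real.sqrt n := by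
  classical
  -- measurability of Y
  have hYm : ∀ n, Measurable (Y n) := by
    intro n
    induction n with
    | zero =>
        have h : Y 0 = fun _ => (0:ℤ) := funext hY0
        rw [h]; exact measurable_const
    | succ k ih =>
        have h : Y (k+1) = fun ω => max 0 (Y k ω + X (k+1) ω) := funext (hYs k)
        rw [h]; exact Measurable.max measurable_const (ih.add (hmeas _))
  -- a.e. the increments are in {-1,0,1}
  have hsetm : ∀ (i : ℕ) (z : ℤ), MeasurableSet {ω | X i ω = z} := by
    intro i z
    have h : {ω | X i ω = z} = X i ⁻¹' {z} := by ext ω; simp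
    rw [h]; exact hmeas i (measurableSet_singleton z)
  have hae : ∀ i, ∀ᵐ ω ∂ℙ, X i ω = -1 ∨ X i ω = 0 ∨ X i ω = 1 := by
    intro i
    have hA := hsetm i (-1)
    have hB := hsetm i 0
    have hC := hsetm i 1
    have hU : {ω | X i ω = -1 ∨ X i ω = 0 ∨ X i ω = 1}
        = {ω | X i ω = -1} ∪ ({ω | X i ω = 0} ∪ {ω | X i ω = 1}) := by
      ext ω; simp [Set.mem_setOf_eq]
    have hd1 : Disjoint {ω | X i ω = 0} {ω | X i ω = 1} := by
      rw [Set.disjoint_left]; intro ω h1 h2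
      simp only [Set.mem_setOf_eq] at h1 h2; omega
    have hd2 : Disjoint {ω | X i ω = -1} ({ω | X i ω = 0} ∪ {ω | X i ω = 1}) := by
      rw [Set.disjoint_left]; intro ω h1 h2
      simp only [Set.mem_union, Set.mem_setOf_eq] at h1 h2; omega
    have hm1' : ℙ {ω | X i ω = -1 ∨ X i ω = 0 ∨ X i ω = 1} = 1 := by
      rw [hU, measure_union hd2 (hB.union hC), measure_union hd1 hC]
      have ht : (ℙ {ω | X i ω = -1} + (ℙ {ω | X i ω = 0} + ℙ {ω | X i ω = 1})).toReal = 1 := by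
        rw [ENNReal.toReal_add (measure_ne_top _ _) (by
          exact ENNReal.add_ne_top.mpr ⟨measure_ne_top _ _, measure_ne_top _ _⟩),
          ENNReal.toReal_add (measure_ne_top _ _) (measure_ne_top _ _),
          hXm i, hX0 i, hXp i]
        linarith
      exact (ENNReal.toReal_eq_one_iff _).mp ht
    have hmeasU : MeasurableSet {ω | X i ω = -1 ∨ X i ω = 0 ∨ X i ω = 1} := by
      rw [hU]; exact hA.union (hB.union hC)
    have hcz : ℙ {ω | X i ω = -1 ∨ X i ω = 0 ∨ X i ω = 1}ᶜ = 0 :=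
      (prob_compl_eq_zero_iff hmeasU).mpr hm1'
    rw [ae_iff, ← Set.compl_setOf]
    exact hcz
  have hXb : ∀ᵐ ω ∂ℙ, ∀ i, -1 ≤ X i ω ∧ X i ω ≤ 1 := by
    rw [MeasureTheory.ae_all_iff]
    intro i
    filter_upwards [hae i] with ω h
    rcases h with h | h | h <;> omega
  have hYnn : ∀ n ω, 0 ≤ Y n ω := by
    intro n ω
    cases n with
    | zero => rw [hY0]
    | succ k => rw [hYs]; exact le_max_left _ _
  have hYle : ∀ᵐ ω ∂ℙ, ∀ n, Y n ω ≤ n := by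
    filter_upwards [hXb] with ω h
    intro n
    induction n with
    | zero => simp [hY0]
    | succ k ih =>
        rw [hYs]
        refine max_le (by positivity) ?_
        have h2 := (h (k+1)).2
        push_cast
        omega
  -- integrability helpers
  have hbd_int : ∀ (f : Ω → ℝ) (Cb : ℝ), Measurable f → (∀ᵐ ω ∂ℙ, |f ω| ≤ Cb) →
      Integrable f ℙ := by
    intro f Cb hf hb
    exact (integrable_const Cb).mono' hf.aestronglyMeasurable (by simpa using hb)
  have hZm : ∀ n, Measurable (fun ω => ((Y n ω : ℤ) : ℝ)) := fun n =>
    measurable_from_top.comp (hYm n)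
  have hWm : ∀ i, Measurable (fun ω => ((X i ω : ℤ) : ℝ)) := fun i =>
    measurable_from_top.comp (hmeas i)
  have hZWint : ∀ n j k, Integrable (fun ω => ((Y n ω : ℝ))^j * ((X (n+1) ω : ℝ))^k) ℙ := by
    intro n j k
    refine hbd_int _ ((n:ℝ)^j) (((hZm n).pow_const j).mul ((hWm (n+1)).pow_const k)) ?_
    filter_upwards [hXb, hYle] with ω hx hy
    have h0 : (0:ℤ) ≤ Y n ω := hYnn n ω
    have h1 : Y n ω ≤ n := hy n
    have hx1 := (hx (n+1)).1
    have hx2 := (hx (n+1)).2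
    rw [abs_mul, abs_pow, abs_pow]
    have e1 : |((Y n ω : ℝ))| ≤ (n:ℝ) := by
      rw [abs_of_nonneg (by exact_mod_cast h0)]; exact_mod_cast h1
    have e2 : |((X (n+1) ω : ℝ))| ≤ 1 := by
      rw [abs_le]; constructor <;> [exact_mod_cast hx1; exact_mod_cast hx2]
    calc |((Y n ω : ℝ))|^j * |((X (n+1) ω : ℝ))|^k ≤ (n:ℝ)^j * 1^k := by
          exact mul_le_mul (pow_le_pow_left₀ (abs_nonneg _) e1 j)
            (pow_le_pow_left₀ (abs_nonneg _) e2 k) (by positivity) (by positivity)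
      _ = (n:ℝ)^j := by rw [one_pow, mul_one]
  have hZint : ∀ n j, Integrable (fun ω => ((Y n ω : ℝ))^j) ℙ := by
    intro n j
    have := hZWint n j 0
    simpa using this
  have hWint : ∀ i k, Integrable (fun ω => ((X i ω : ℝ))^k) ℙ := by
    intro i k
    refine hbd_int _ 1 ((hWm i).pow_const k) ?_
    filter_upwards [hXb] with ω h
    have h1 := (h i).1; have h2 := (h i).2
    rw [abs_pow]
    calc |((X i ω : ℤ) : ℝ)| ^ k ≤ 1 ^ k := by
          apply pow_le_pow_left₀ (abs_nonneg _)
          rw [abs_le]; constructor <;> [exact_mod_cast h1; exact_mod_cast h2]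
      _ = 1 := one_pow k
  -- moments of the increments
  have hmom : ∀ i k, 1 ≤ k → ∫ ω, ((X i ω : ℝ))^k ∂ℙ = (-1:ℝ)^k * pm + pp := by
    intro i k hk
    have hcong : (fun ω => ((X i ω : ℝ))^k) =ᵐ[ℙ]
        (fun ω => Set.indicator {ω | X i ω = -1} (fun _ => ((-1:ℝ))^k) ω
          + Set.indicator {ω | X i ω = 1} (fun _ => (1:ℝ)) ω) := by
      filter_upwards [hae i] with ω h
      rcases h with h | h | h
      · simp [Set.indicator_apply, Set.mem_setOf_eq, h]
      · simp [Set.indicator_apply, Set.mem_setOf_eq, h, zero_pow (by omega : k ≠ 0)]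
      · simp [Set.indicator_apply, Set.mem_setOf_eq, h]
    rw [integral_congr_ae hcong,
      integral_add ((integrable_const _).indicator (hsetm i (-1)))
        ((integrable_const _).indicator (hsetm i 1)),
      integral_indicator_const _ (hsetm i (-1)), integral_indicator_const _ (hsetm i 1),
      smul_eq_mul, smul_eq_mul, measureReal_def, measureReal_def, hXm i, hXp i]
    ring
  -- independence of Y n and X (n+1)
  have hYW : ∀ m ω, Y m ω = walkF m (fun i => X i ω) := by
    intro m
    induction m with
    | zero => intro ω; rw [hY0]; rfl
    | succ k ih => intro ω; rw [hYs, walkF, ← ih ω]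
  have hYind : ∀ n, IndepFun (Y n) (X (n+1)) ℙ := by
    intro n
    have hD : Disjoint (Finset.range (n+1)) ({n+1} : Finset ℕ) := by
      simp [Finset.disjoint_singleton_right]
    have base := hindep.indepFun_finset (Finset.range (n+1)) {n+1} hD hmeas
    let φ : (↥(Finset.range (n+1)) → ℤ) → ℤ := fun v =>
      walkF n (fun i => if h : i ∈ Finset.range (n+1) then v ⟨i, h⟩ else 0)
    let ψ : (↥({n+1} : Finset ℕ) → ℤ) → ℤ := fun v => v ⟨n+1, Finset.mem_singleton_self _⟩
    have hφ : Measurable φ := by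
      apply (walkF_measurable n).comp
      apply measurable_pi_lambda
      intro i
      by_cases h : i ∈ Finset.range (n+1)
      · simp only [dif_pos h]; exact measurable_pi_apply _
      · simp only [dif_neg h]; exact measurable_const
    have hψ : Measurable ψ := measurable_pi_apply _
    have key := base.comp hφ hψ
    have e1 : φ ∘ (fun a (i : ↥(Finset.range (n+1))) => X i a) = Y n := by
      funext ω
      show walkF n (fun i => if h : i ∈ Finset.range (n+1) then X i ω else 0) = Y n ω
      rw [hYW n ω]
      apply walkF_congr
      intro i hi
      have hmem : i ∈ Finset.range (n+1) := Finset.mem_range.mpr (Nat.lt_succ_of_le hi)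
      simp [hmem]
    have e2 : ψ ∘ (fun a (i : ↥({n+1} : Finset ℕ)) => X i a) = X (n+1) := rfl
    rw [e1, e2] at key
    exact key
  have hfact : ∀ n j k, ∫ ω, ((Y n ω : ℝ))^j * ((X (n+1) ω : ℝ))^k ∂ℙ
      = (∫ ω, ((Y n ω : ℝ))^j ∂ℙ) * (∫ ω, ((X (n+1) ω : ℝ))^k ∂ℙ) := by
    intro n j k
    have h1 : IndepFun (fun ω => ((Y n ω : ℝ))^j) (fun ω => ((X (n+1) ω : ℝ))^k) ℙ :=
      (hYind n).comp (measurable_from_top (f := fun y : ℤ => ((y:ℝ))^j))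
        (measurable_from_top (f := fun x : ℤ => ((x:ℝ))^k))
    exact h1.integral_fun_mul_eq_mul_integral (hZint n j).aestronglyMeasurable (hWint (n+1) k).aestronglyMeasurable
  have hZ1int : ∀ m, Integrable (fun ω => ((Y m ω : ℝ))) ℙ := by
    intro m; simpa using hZint m 1
  -- the three moment sequences
  set a : ℕ → ℝ := fun n => ∫ ω, ((Y n ω : ℝ)) ∂ℙ with ha_def
  set b : ℕ → ℝ := fun n => ∫ ω, ((Y n ω : ℝ))^2 ∂ℙ with hb_def
  set c : ℕ → ℝ := fun n => ∫ ω, ((Y n ω : ℝ))^3 ∂ℙ with hc_def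
  have ha_pow : ∀ n, ∫ ω, ((Y n ω : ℝ))^1 ∂ℙ = a n := by
    intro n; simp only [pow_one, ha_def]
  have hm1 : ∀ i, ∫ ω, ((X i ω : ℝ))^1 ∂ℙ = 0 := by
    intro i; rw [hmom i 1 le_rfl]; rw [heq]; ring
  have hm2 : ∀ i, ∫ ω, ((X i ω : ℝ))^2 ∂ℙ = 2*pp := by
    intro i; rw [hmom i 2 (by norm_num)]; rw [heq]; ring
  have hm3 : ∀ i, ∫ ω, ((X i ω : ℝ))^3 ∂ℙ = 0 := by
    intro i; rw [hmom i 3 (by norm_num)]; rw [heq]; ring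
  have ha0 : a 0 = 0 := by simp [ha_def, hY0]
  have hb0 : b 0 = 0 := by simp [hb_def, hY0]
  have hc0 : c 0 = 0 := by simp [hc_def, hY0]
  have ha_nn : ∀ n, 0 ≤ a n := by
    intro n; apply integral_nonneg; intro ω
    simp only [Pi.zero_apply]; exact_mod_cast hYnn n ω
  have hb_nn : ∀ n, 0 ≤ b n := by
    intro n; apply integral_nonneg; intro ω; simp only [Pi.zero_apply]; positivity
  have hc_nn : ∀ n, 0 ≤ c n := by
    intro n; apply integral_nonneg; intro ω
    simp only [Pi.zero_apply]
    have : (0:ℝ) ≤ ((Y n ω : ℝ)) := by exact_mod_cast hYnn n ω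
    positivity
  -- second-moment recursion
  have hb_pow : ∀ n, (∫ ω, ((Y n ω : ℝ))^2 ∂ℙ) = b n := fun n => rfl
  have hc_pow : ∀ n, (∫ ω, ((Y n ω : ℝ))^3 ∂ℙ) = c n := fun n => rfl
  have ha_raw : ∀ n, (∫ ω, ((Y n ω : ℝ)) ∂ℙ) = a n := fun n => rfl
  have hstep2 : ∀ n, b (n+1) + a (n+1) = b n + a n + 2*pp := by
    intro n
    have hpt : (fun ω => ((Y (n+1) ω : ℝ))^2 + ((Y (n+1) ω : ℝ))) =ᵐ[ℙ]
        (fun ω => ((Y n ω : ℝ))^2 + (2*(((Y n ω : ℝ))^1 * ((X (n+1) ω : ℝ))^1)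
          + (((X (n+1) ω : ℝ))^2 + (((Y n ω : ℝ))^1 + ((X (n+1) ω : ℝ))^1)))) := by
      filter_upwards [hXb] with ω h
      have h1 := (h (n+1)).1
      have h0 := hYnn n ω
      have key : (Y (n+1) ω)^2 + Y (n+1) ω = (Y n ω + X (n+1) ω)^2 + (Y n ω + X (n+1) ω) := by
        rw [hYs]
        rcases le_or_gt 0 (Y n ω + X (n+1) ω) with ht | ht
        · rw [max_eq_right ht]
        · have he : Y n ω + X (n+1) ω = -1 := by omega
          rw [he]; norm_num
      have keyR : ((Y (n+1) ω : ℝ))^2 + ((Y (n+1) ω : ℝ))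
          = (((Y n ω : ℝ)) + ((X (n+1) ω : ℝ)))^2 + (((Y n ω : ℝ)) + ((X (n+1) ω : ℝ))) := by
        exact_mod_cast key
      rw [keyR]; ring
    have I2 : Integrable (fun ω => 2*(((Y n ω : ℝ))^1 * ((X (n+1) ω : ℝ))^1)) ℙ :=
      (hZWint n 1 1).const_mul 2
    have I3 := hWint (n+1) 2
    have I4 := hZint n 1
    have I5 := hWint (n+1) 1
    have lhs_eq : ∫ ω, (((Y (n+1) ω : ℝ))^2 + ((Y (n+1) ω : ℝ))) ∂ℙ = b (n+1) + a (n+1) := by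
      rw [integral_add (hZint (n+1) 2) (hZ1int (n+1))]
    have I45 : Integrable (fun ω => ((Y n ω : ℝ))^1 + ((X (n+1) ω : ℝ))^1) ℙ := I4.add I5
    have I345 : Integrable (fun ω => ((X (n+1) ω : ℝ))^2
        + (((Y n ω : ℝ))^1 + ((X (n+1) ω : ℝ))^1)) ℙ := I3.add I45
    have I2345 : Integrable (fun ω => 2*(((Y n ω : ℝ))^1 * ((X (n+1) ω : ℝ))^1)
        + (((X (n+1) ω : ℝ))^2 + (((Y n ω : ℝ))^1 + ((X (n+1) ω : ℝ))^1))) ℙ := I2.add I345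
    have rhs_eq : ∫ ω, (((Y n ω : ℝ))^2 + (2*(((Y n ω : ℝ))^1 * ((X (n+1) ω : ℝ))^1)
          + (((X (n+1) ω : ℝ))^2 + (((Y n ω : ℝ))^1 + ((X (n+1) ω : ℝ))^1)))) ∂ℙ
        = b n + (2*(a n * 0) + (2*pp + (a n + 0))) := by
      rw [integral_add (hZint n 2) I2345]; beta_reduce
      rw [integral_add I2 I345]; beta_reduce
      rw [integral_add I3 I45]; beta_reduce
      rw [integral_add I4 I5]; beta_reduce
      rw [integral_const_mul, hfact n 1 1, ha_pow n, hm1 (n+1), hm2 (n+1), hb_pow n]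
    calc b (n+1) + a (n+1)
        = ∫ ω, (((Y (n+1) ω : ℝ))^2 + ((Y (n+1) ω : ℝ))) ∂ℙ := lhs_eq.symm
      _ = ∫ ω, (((Y n ω : ℝ))^2 + (2*(((Y n ω : ℝ))^1 * ((X (n+1) ω : ℝ))^1)
          + (((X (n+1) ω : ℝ))^2 + (((Y n ω : ℝ))^1 + ((X (n+1) ω : ℝ))^1)))) ∂ℙ :=
          integral_congr_ae hpt
      _ = b n + (2*(a n * 0) + (2*pp + (a n + 0))) := rhs_eq
      _ = b n + a n + 2*pp := by ring
  have hab : ∀ n, a n + b n = 2*pp*n := by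
    intro n
    induction n with
    | zero => simp [ha0, hb0]
    | succ k ih =>
        have := hstep2 k
        push_cast
        push_cast at ih
        linarith
  -- Cauchy–Schwarz : a n ^ 2 ≤ b n
  have ha_sq : ∀ n, a n ^ 2 ≤ b n := by
    intro n
    have h := my_cauchy (μ := ℙ) (f := fun ω => ((Y n ω : ℝ))) (g := fun _ => (1:ℝ))
      (hZint n 2) (by simpa using integrable_const (1:ℝ)) (by simpa using hZ1int n)
    simpa using h
  have ha_le : ∀ n, a n ≤ Real.sqrt (2*pp*n) := by
    intro n
    rw [Real.le_sqrt (ha_nn n) (by positivity)]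
    have := hab n
    have := ha_sq n
    have := ha_nn n
    nlinarith
  -- third-moment recursion and bound
  have hstep3 : ∀ n, c (n+1) ≤ c n + 3*(2*pp)*(a n) + 1 := by
    intro n
    have hpt : ∀ᵐ ω ∂ℙ, ((Y (n+1) ω : ℝ))^3
        ≤ ((Y n ω : ℝ))^3 + (3*(((Y n ω : ℝ))^2 * ((X (n+1) ω : ℝ))^1)
          + (3*(((Y n ω : ℝ))^1 * ((X (n+1) ω : ℝ))^2) + (((X (n+1) ω : ℝ))^3 + 1))) := by
      filter_upwards [hXb] with ω h
      have h1 := (h (n+1)).1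
      have h0 := hYnn n ω
      have key : (Y (n+1) ω)^3 ≤ (Y n ω + X (n+1) ω)^3 + 1 := by
        rw [hYs]
        rcases le_or_gt 0 (Y n ω + X (n+1) ω) with ht | ht
        · rw [max_eq_right ht]; linarith
        · have he : Y n ω + X (n+1) ω = -1 := by omega
          rw [he]; norm_num
      have keyR : ((Y (n+1) ω : ℝ))^3 ≤ (((Y n ω : ℝ)) + ((X (n+1) ω : ℝ)))^3 + 1 := by
        exact_mod_cast key
      have hexp : (((Y n ω : ℝ)) + ((X (n+1) ω : ℝ)))^3 + 1
          = ((Y n ω : ℝ))^3 + (3*(((Y n ω : ℝ))^2 * ((X (n+1) ω : ℝ))^1)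
          + (3*(((Y n ω : ℝ))^1 * ((X (n+1) ω : ℝ))^2) + (((X (n+1) ω : ℝ))^3 + 1))) := by
        ring
      linarith [keyR, hexp.le, hexp.ge]
    have I2 : Integrable (fun ω => 3*(((Y n ω : ℝ))^2 * ((X (n+1) ω : ℝ))^1)) ℙ :=
      (hZWint n 2 1).const_mul 3
    have I3 : Integrable (fun ω => 3*(((Y n ω : ℝ))^1 * ((X (n+1) ω : ℝ))^2)) ℙ :=
      (hZWint n 1 2).const_mul 3
    have I4 := hWint (n+1) 3
    have I5 : Integrable (fun _ : Ω => (1:ℝ)) ℙ := integrable_const 1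
    have I45 : Integrable (fun ω => ((X (n+1) ω : ℝ))^3 + 1) ℙ := I4.add I5
    have I345 : Integrable (fun ω => 3*(((Y n ω : ℝ))^1 * ((X (n+1) ω : ℝ))^2)
        + (((X (n+1) ω : ℝ))^3 + 1)) ℙ := I3.add I45
    have I2345 : Integrable (fun ω => 3*(((Y n ω : ℝ))^2 * ((X (n+1) ω : ℝ))^1)
        + (3*(((Y n ω : ℝ))^1 * ((X (n+1) ω : ℝ))^2) + (((X (n+1) ω : ℝ))^3 + 1))) ℙ :=
      I2.add I345
    have hmono : (∫ ω, ((Y (n+1) ω : ℝ))^3 ∂ℙ)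
        ≤ ∫ ω, (((Y n ω : ℝ))^3 + (3*(((Y n ω : ℝ))^2 * ((X (n+1) ω : ℝ))^1)
          + (3*(((Y n ω : ℝ))^1 * ((X (n+1) ω : ℝ))^2) + (((X (n+1) ω : ℝ))^3 + 1)))) ∂ℙ :=
      integral_mono_ae (hZint (n+1) 3) ((hZint n 3).add I2345) hpt
    have rhs_eq : ∫ ω, (((Y n ω : ℝ))^3 + (3*(((Y n ω : ℝ))^2 * ((X (n+1) ω : ℝ))^1)
          + (3*(((Y n ω : ℝ))^1 * ((X (n+1) ω : ℝ))^2) + (((X (n+1) ω : ℝ))^3 + 1)))) ∂ℙ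
        = c n + (3*(b n * 0) + (3*(a n * (2*pp)) + (0 + 1))) := by
      have e0 : ∫ ω, (((Y n ω : ℝ))^3 + (3*(((Y n ω : ℝ))^2 * ((X (n+1) ω : ℝ))^1)
          + (3*(((Y n ω : ℝ))^1 * ((X (n+1) ω : ℝ))^2) + (((X (n+1) ω : ℝ))^3 + 1)))) ∂ℙ
          = (∫ ω, ((Y n ω : ℝ))^3 ∂ℙ) + ∫ ω, (3*(((Y n ω : ℝ))^2 * ((X (n+1) ω : ℝ))^1)
          + (3*(((Y n ω : ℝ))^1 * ((X (n+1) ω : ℝ))^2) + (((X (n+1) ω : ℝ))^3 + 1))) ∂ℙ :=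
        integral_add (hZint n 3) I2345
      have e1 : ∫ ω, (3*(((Y n ω : ℝ))^2 * ((X (n+1) ω : ℝ))^1)
          + (3*(((Y n ω : ℝ))^1 * ((X (n+1) ω : ℝ))^2) + (((X (n+1) ω : ℝ))^3 + 1))) ∂ℙ
          = (∫ ω, 3*(((Y n ω : ℝ))^2 * ((X (n+1) ω : ℝ))^1) ∂ℙ)
          + ∫ ω, (3*(((Y n ω : ℝ))^1 * ((X (n+1) ω : ℝ))^2) + (((X (n+1) ω : ℝ))^3 + 1)) ∂ℙ :=
        integral_add I2 I345
      have e2 : ∫ ω, (3*(((Y n ω : ℝ))^1 * ((X (n+1) ω : ℝ))^2) + (((X (n+1) ω : ℝ))^3 + 1)) ∂ℙ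
          = (∫ ω, 3*(((Y n ω : ℝ))^1 * ((X (n+1) ω : ℝ))^2) ∂ℙ)
          + ∫ ω, (((X (n+1) ω : ℝ))^3 + 1) ∂ℙ :=
        integral_add I3 I45
      have e3 : ∫ ω, (((X (n+1) ω : ℝ))^3 + 1) ∂ℙ
          = (∫ ω, ((X (n+1) ω : ℝ))^3 ∂ℙ) + ∫ (_ : Ω), (1:ℝ) ∂ℙ :=
        integral_add I4 I5
      rw [e0, e1, e2, e3, integral_const_mul, integral_const_mul, hfact n 2 1, hfact n 1 2,
        ha_pow n, hb_pow n, hm1 (n+1), hm2 (n+1), hm3 (n+1), hc_pow n]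
      simp
    rw [rhs_eq] at hmono
    calc c (n+1) = ∫ ω, ((Y (n+1) ω : ℝ))^3 ∂ℙ := rfl
      _ ≤ c n + (3*(b n * 0) + (3*(a n * (2*pp)) + (0 + 1))) := hmono
      _ = c n + 3*(2*pp)*(a n) + 1 := by ring
  have hc_bd : ∀ n : ℕ, c n ≤ n * (3*(2*pp)*Real.sqrt (2*pp*n) + 1) := by
    intro n
    induction n with
    | zero => simp [hc0]
    | succ k ih =>
        have h1 := hstep3 k
        have h2 := ha_le k
        have hmono : Real.sqrt (2*pp*k) ≤ Real.sqrt (2*pp*(k+1)) := by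
          apply Real.sqrt_le_sqrt; push_cast; nlinarith
        have hs_nn : 0 ≤ Real.sqrt (2*pp*k) := Real.sqrt_nonneg _
        push_cast
        push_cast at ih h1 h2 hmono
        nlinarith [Nat.cast_nonneg (α := ℝ) k,
          mul_le_mul_of_nonneg_left hmono (by positivity : (0:ℝ) ≤ 3*(2*pp)*((k:ℝ)+1)),
          mul_le_mul_of_nonneg_left h2 (by positivity : (0:ℝ) ≤ 3*(2*pp))]
  -- b n ^ 2 ≤ a n * c n  (Cauchy–Schwarz with √Z and Z^{3/2})
  have hbc : ∀ n, b n ^ 2 ≤ a n * c n := by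
    intro n
    have hznn : ∀ ω, (0:ℝ) ≤ ((Y n ω : ℝ)) := fun ω => by exact_mod_cast hYnn n ω
    set f : Ω → ℝ := fun ω => Real.sqrt ((Y n ω : ℝ)) with hf_def
    set g : Ω → ℝ := fun ω => ((Y n ω : ℝ)) * Real.sqrt ((Y n ω : ℝ)) with hg_def
    have e1 : (fun ω => f ω ^ 2) = fun ω => ((Y n ω : ℝ)) := by
      funext ω; simp only [hf_def]; exact Real.sq_sqrt (hznn ω)
    have e2 : (fun ω => g ω ^ 2) = fun ω => ((Y n ω : ℝ))^3 := by
      funext ω; simp only [hg_def]; rw [mul_pow, Real.sq_sqrt (hznn ω)]; ring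
    have e3 : (fun ω => f ω * g ω) = fun ω => ((Y n ω : ℝ))^2 := by
      funext ω; simp only [hf_def, hg_def]
      rw [show Real.sqrt ((Y n ω : ℝ)) * (((Y n ω : ℝ)) * Real.sqrt ((Y n ω : ℝ)))
          = (Real.sqrt ((Y n ω : ℝ)) * Real.sqrt ((Y n ω : ℝ))) * ((Y n ω : ℝ)) from by ring,
        Real.mul_self_sqrt (hznn ω)]
      ring
    have h := my_cauchy (μ := ℙ) (f := f) (g := g)
      (by rw [e1]; exact hZ1int n) (by rw [e2]; exact hZint n 3) (by rw [e3]; exact hZint n 2)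
    rw [e1, e2, e3] at h
    rw [hb_pow n, hc_pow n, ha_raw n] at h
    exact h
  -- final assembly
  refine ⟨(2*pp)^2 / (4*(3*(2*pp)*Real.sqrt (2*pp) + 1)), Real.sqrt (2*pp),
    div_pos (by nlinarith) (by nlinarith [Real.sqrt_nonneg (2*pp)]),
    Real.sqrt_pos.mpr (by linarith), ⌈(4:ℝ)/(2*pp)⌉₊ + 1, ?_⟩
  intro n hn
  have hn1 : 1 ≤ n := le_trans (Nat.le_add_left 1 _) hn
  have hnn : (0:ℝ) ≤ (n:ℝ) := Nat.cast_nonneg n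
  have hceil : ((4:ℝ)/(2*pp)) ≤ (n:ℝ) := by
    have h1 : ((⌈(4:ℝ)/(2*pp)⌉₊ : ℕ) : ℝ) ≤ (n:ℝ) := by
      exact_mod_cast Nat.le_of_succ_le hn
    exact le_trans (Nat.le_ceil _) h1
  have h4 : (4:ℝ) ≤ 2*pp*(n:ℝ) := by
    rw [div_le_iff₀ (by positivity)] at hceil
    nlinarith [hceil]
  set q := Real.sqrt (n:ℝ) with hq_def
  have hq0 : 0 ≤ q := Real.sqrt_nonneg _
  have hq2 : q^2 = (n:ℝ) := Real.sq_sqrt hnn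
  have hq1 : 1 ≤ q := by
    have hn1' : (1:ℝ) ≤ (n:ℝ) := by exact_mod_cast hn1
    nlinarith [hq0, hq2]
  have hsq_mul : Real.sqrt (2*pp*(n:ℝ)) = Real.sqrt (2*pp) * q := by
    rw [hq_def, ← Real.sqrt_mul (by positivity)]
  constructor
  · -- lower bound
    have hb_lb : pp*(n:ℝ) ≤ b n := by
      have h1 := hab n
      have h2 : a n ≤ Real.sqrt (2*pp*(n:ℝ)) := ha_le n
      have hr2 : (Real.sqrt (2*pp*(n:ℝ)))^2 = 2*pp*(n:ℝ) := Real.sq_sqrt (by positivity)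
      have hr0 : 0 ≤ Real.sqrt (2*pp*(n:ℝ)) := Real.sqrt_nonneg _
      have hr_le : Real.sqrt (2*pp*(n:ℝ)) ≤ pp*(n:ℝ) := by
        nlinarith [sq_nonneg (Real.sqrt (2*pp*(n:ℝ)) - 2), hr2, h4]
      linarith
    set M := 3*(2*pp)*Real.sqrt (2*pp) + 1 with hM_def
    have hM0 : 0 < M := by
      rw [hM_def]
      positivity
    have hc_ub : c n ≤ M * q^3 := by
      have h1 := hc_bd n
      have h2 : (n:ℝ)*(3*(2*pp)*Real.sqrt (2*pp*(n:ℝ)) + 1) ≤ M*q^3 := by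
        rw [hsq_mul, hM_def, ← hq2]
        have hs0 : 0 ≤ Real.sqrt (2*pp) := Real.sqrt_nonneg _
        have hq23 : q^2 ≤ q^3 := pow_le_pow_right₀ hq1 (by norm_num)
        nlinarith [hq23, mul_le_mul_of_nonneg_left hq23 (mul_nonneg (by positivity : (0:ℝ) ≤ 3*(2*pp)) hs0)]
      linarith
    have hkey : b n ^2 ≤ a n * (M*q^3) :=
      le_trans (hbc n) (mul_le_mul_of_nonneg_left hc_ub (ha_nn n))
    have h2 : pp^2*q^4 ≤ a n * (M*q^3) := by
      have hbl : 0 ≤ pp*(n:ℝ) := by positivity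
      have hq4 : q^4 = (n:ℝ)^2 := by rw [← hq2]; ring
      nlinarith [hkey, mul_self_le_mul_self hbl hb_lb, hq4, hb_nn n]
    have hq3 : (0:ℝ) < q^3 := by positivity
    have h3 : pp^2*q*q^3 ≤ (a n * M)*q^3 := by nlinarith [h2]
    have h5 : pp^2*q ≤ a n * M := le_of_mul_le_mul_right (by linarith [h3]) hq3
    rw [div_mul_eq_mul_div, div_le_iff₀ (by linarith [hM0])]
    nlinarith [h5]
  · -- upper bound
    calc a n ≤ Real.sqrt (2*pp*(n:ℝ)) := ha_le n
      _ = Real.sqrt (2*pp) * q := hsq_mul
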